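/- In a series-parallel dag with DePa labeling, for any two vertices u and v, if f(u) = f(v) then u and v are comparable: u ≼ v or v ≼ u. -/

import Mathlib

/-- Series-parallel dag shapes: a single vertex, serial composition
(identifying the sink of `g1` with the source of `g2`), or parallel
composition (fresh source with edges to the sources of `g1`, `g2`, and a
fresh sink with edges from their sinks). -/
inductive SP : Type where
  | vert : SP
  | seq : SP → SP → SP
  | par : SP → SP → SP

/-- Non-source vertices of a series-parallel dag. -/
def NV : SP → Type
  | .vert => Empty
  | .seq g1 g2 => NV g1 ⊕ NV g2
  | .par g1 g2 => ((Unit ⊕ NV g1) ⊕ (Unit ⊕ NV g2)) ⊕ Unit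

/-- Vertices: the source, or a non-source vertex. -/
abbrev V (g : SP) : Type := Unit ⊕ NV g

/-- The (unique) source of a series-parallel dag. -/
def src (g : SP) : V g := Sum.inl ()

/-- Embedding of the first component of a serial composition. -/
def emb1 (g1 g2 : SP) : V g1 → V (.seq g1 g2)
  | .inl _ => Sum.inl ()
  | .inr n => Sum.inr (Sum.inl n)

/-- The (unique) sink of a series-parallel dag. -/
def snk : (g : SP) → V g
  | .vert => Sum.inl ()
  | .seq g1 g2 =>
    match snk g2 with
    | .inl _ => emb1 g1 g2 (snk g1)
    | .inr n => Sum.inr (Sum.inr n)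
  | .par _ _ => Sum.inr (Sum.inr ())

/-- Embedding of the second component of a serial composition:
the source of `g2` is identified with the sink of `g1`. -/
def emb2 (g1 g2 : SP) : V g2 → V (.seq g1 g2)
  | .inl _ => emb1 g1 g2 (snk g1)
  | .inr n => Sum.inr (Sum.inr n)

/-- Embedding of the left branch of a parallel composition. -/
def embL (g1 g2 : SP) (v : V g1) : V (.par g1 g2) := Sum.inr (Sum.inl (Sum.inl v))

/-- Embedding of the right branch of a parallel composition. -/
def embR (g1 g2 : SP) (v : V g2) : V (.par g1 g2) := Sum.inr (Sum.inl (Sum.inr v))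

/-- Edges of a series-parallel dag. -/
def Edge : (g : SP) → V g → V g → Prop
  | .vert, _, _ => False
  | .seq g1 g2, u, v =>
      (∃ a b, Edge g1 a b ∧ u = emb1 g1 g2 a ∧ v = emb1 g1 g2 b) ∨
      (∃ a b, Edge g2 a b ∧ u = emb2 g1 g2 a ∧ v = emb2 g1 g2 b)
  | .par g1 g2, u, v =>
      (∃ a b, Edge g1 a b ∧ u = embL g1 g2 a ∧ v = embL g1 g2 b) ∨
      (∃ a b, Edge g2 a b ∧ u = embR g1 g2 a ∧ v = embR g1 g2 b) ∨
      (u = src (.par g1 g2) ∧ v = embL g1 g2 (src g1)) ∨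
      (u = src (.par g1 g2) ∧ v = embR g1 g2 (src g2)) ∨
      (u = embL g1 g2 (snk g1) ∧ v = snk (.par g1 g2)) ∨
      (u = embR g1 g2 (snk g2) ∧ v = snk (.par g1 g2))

/-- `Reach g u v` (`u ≼ v`): there is a directed path (possibly empty) from `u` to `v`. -/
def Reach (g : SP) : V g → V g → Prop := Relation.ReflTransGen (Edge g)

/-- The dag-depth of a vertex (the length of a longest path ending at it),
computed by the DePa rules: the source has depth 0; at a fork both children
have depth one greater; at a join the new vertex has depth
`1 + max` of the depths of the joining vertices. -/
def depth : (g : SP) → V g → ℕ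
  | .vert, _ => 0
  | .seq _ _, .inl _ => 0
  | .seq g1 _, .inr (.inl n) => depth g1 (Sum.inr n)
  | .seq g1 g2, .inr (.inr n) => depth g1 (snk g1) + depth g2 (Sum.inr n)
  | .par _ _, .inl _ => 0
  | .par g1 _, .inr (.inl (.inl v)) => 1 + depth g1 v
  | .par _ g2, .inr (.inl (.inr v)) => 1 + depth g2 v
  | .par g1 g2, .inr (.inr _) => 1 + max (1 + depth g1 (snk g1)) (1 + depth g2 (snk g2))

/-- The fork-path of a vertex, as a list of bits (`false` = L, `true` = R),
outermost fork first: the root has the empty path, a fork extends the path by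
L and R for the two branches, and a join restores the common prefix. -/
def fpath : (g : SP) → V g → List Bool
  | .vert, _ => []
  | .seq _ _, .inl _ => []
  | .seq g1 _, .inr (.inl n) => fpath g1 (Sum.inr n)
  | .seq _ g2, .inr (.inr n) => fpath g2 (Sum.inr n)
  | .par _ _, .inl _ => []
  | .par g1 _, .inr (.inl (.inl v)) => false :: fpath g1 v
  | .par _ g2, .inr (.inl (.inr v)) => true :: fpath g2 v
  | .par _ _, .inr (.inr _) => []

/-- Longest common prefix of two lists. -/
def lcp : List Bool → List Bool → List Bool
  | a :: as, b :: bs => if a = b then a :: lcp as bs else []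
  | _, _ => []

lemma reach_emb1 (g1 g2 : SP) {a b : V g1} (h : Reach g1 a b) :
    Reach (.seq g1 g2) (emb1 g1 g2 a) (emb1 g1 g2 b) :=
  Relation.ReflTransGen.lift (p := Edge (.seq g1 g2)) (emb1 g1 g2) (fun x y e => Or.inl ⟨x, y, e, rfl, rfl⟩) _ _ h

lemma reach_emb2 (g1 g2 : SP) {a b : V g2} (h : Reach g2 a b) :
    Reach (.seq g1 g2) (emb2 g1 g2 a) (emb2 g1 g2 b) :=
  Relation.ReflTransGen.lift (p := Edge (.seq g1 g2)) (emb2 g1 g2) (fun x y e => Or.inr ⟨x, y, e, rfl, rfl⟩) _ _ h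

lemma reach_embL (g1 g2 : SP) {a b : V g1} (h : Reach g1 a b) :
    Reach (.par g1 g2) (embL g1 g2 a) (embL g1 g2 b) :=
  Relation.ReflTransGen.lift (p := Edge (.par g1 g2)) (embL g1 g2) (fun x y e => Or.inl ⟨x, y, e, rfl, rfl⟩) _ _ h

lemma reach_embR (g1 g2 : SP) {a b : V g2} (h : Reach g2 a b) :
    Reach (.par g1 g2) (embR g1 g2 a) (embR g1 g2 b) :=
  Relation.ReflTransGen.lift (p := Edge (.par g1 g2)) (embR g1 g2) (fun x y e => Or.inr (Or.inl ⟨x, y, e, rfl, rfl⟩)) _ _ h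

lemma snk_seq (g1 g2 : SP) : snk (.seq g1 g2) = emb2 g1 g2 (snk g2) := by
  show (match snk g2 with
    | Sum.inl _ => emb1 g1 g2 (snk g1)
    | Sum.inr n => Sum.inr (Sum.inr n)) = emb2 g1 g2 (snk g2)
  cases snk g2 <;> rfl

lemma emb2_src (g1 g2 : SP) : emb2 g1 g2 (src g2) = emb1 g1 g2 (snk g1) := rfl

lemma src_reach : ∀ (g : SP) (v : V g), Reach g (src g) v := by
  intro g
  induction g with
  | vert =>
    rintro (⟨⟩ | e)
    · exact Relation.ReflTransGen.refl
    · exact (show Empty from e).elim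
  | seq g1 g2 ih1 ih2 =>
    rintro (⟨⟩ | (n | n))
    · exact Relation.ReflTransGen.refl
    · exact reach_emb1 g1 g2 (ih1 (Sum.inr n))
    · exact Relation.ReflTransGen.trans
        (reach_emb1 g1 g2 (ih1 (snk g1)))
        (emb2_src g1 g2 ▸ reach_emb2 g1 g2 (ih2 (Sum.inr n)))
  | par g1 g2 ih1 ih2 =>
    have eL : Reach (.par g1 g2) (src _) (embL g1 g2 (src g1)) :=
      Relation.ReflTransGen.single (Or.inr (Or.inr (Or.inl ⟨rfl, rfl⟩)))
    have eR : Reach (.par g1 g2) (src _) (embR g1 g2 (src g2)) :=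
      Relation.ReflTransGen.single (Or.inr (Or.inr (Or.inr (Or.inl ⟨rfl, rfl⟩))))
    rintro (⟨⟩ | (((v | v) | ⟨⟩)))
    · exact Relation.ReflTransGen.refl
    · exact Relation.ReflTransGen.trans eL (reach_embL g1 g2 (ih1 v))
    · exact Relation.ReflTransGen.trans eR (reach_embR g1 g2 (ih2 v))
    · exact Relation.ReflTransGen.trans
        (Relation.ReflTransGen.trans eL (reach_embL g1 g2 (ih1 (snk g1))))
        (Relation.ReflTransGen.single (Or.inr (Or.inr (Or.inr (Or.inr (Or.inl ⟨rfl, rfl⟩))))))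

lemma reach_snk : ∀ (g : SP) (v : V g), Reach g v (snk g) := by
  intro g
  induction g with
  | vert =>
    rintro (⟨⟩ | e)
    · exact Relation.ReflTransGen.refl
    · exact (show Empty from e).elim
  | seq g1 g2 ih1 ih2 =>
    have h2 : ∀ w : V g2, Reach (.seq g1 g2) (emb2 g1 g2 w) (snk (.seq g1 g2)) := by
      intro w; rw [snk_seq]; exact reach_emb2 g1 g2 (ih2 w)
    rintro (⟨⟩ | (n | n))
    · exact Relation.ReflTransGen.trans
        (reach_emb1 g1 g2 (ih1 (src g1))) (emb2_src g1 g2 ▸ h2 (src g2))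
    · exact Relation.ReflTransGen.trans
        (reach_emb1 g1 g2 (ih1 (Sum.inr n))) (emb2_src g1 g2 ▸ h2 (src g2))
    · exact h2 (Sum.inr n)
  | par g1 g2 ih1 ih2 =>
    have eL : Reach (.par g1 g2) (embL g1 g2 (snk g1)) (snk _) :=
      Relation.ReflTransGen.single (Or.inr (Or.inr (Or.inr (Or.inr (Or.inl ⟨rfl, rfl⟩)))))
    have eR : Reach (.par g1 g2) (embR g1 g2 (snk g2)) (snk _) :=
      Relation.ReflTransGen.single (Or.inr (Or.inr (Or.inr (Or.inr (Or.inr ⟨rfl, rfl⟩)))))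
    rintro (⟨⟩ | (((v | v) | ⟨⟩)))
    · exact Relation.ReflTransGen.trans (src_reach _ (embL g1 g2 (snk g1))) eL
    · exact Relation.ReflTransGen.trans (reach_embL g1 g2 (ih1 v)) eL
    · exact Relation.ReflTransGen.trans (reach_embR g1 g2 (ih2 v)) eR
    · exact Relation.ReflTransGen.refl

/-- two vertices with equal fork-paths are comparable. -/
theorem comparable_of_fpath_eq (g : SP) (u v : V g)
    (h : fpath g u = fpath g v) :
    Reach g u v ∨ Reach g v u := by
  induction g with
  | vert =>
    rcases u with ⟨⟩ | e
    · rcases v with ⟨⟩ | e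
      · exact Or.inl Relation.ReflTransGen.refl
      · exact (show Empty from e).elim
    · exact (show Empty from e).elim
  | seq g1 g2 ih1 ih2 =>
    -- in a series composition, any g1-vertex reaches any g2-vertex
    have cross : ∀ (a : V g1) (b : V g2),
        Reach (.seq g1 g2) (emb1 g1 g2 a) (emb2 g1 g2 b) := by
      intro a b
      exact Relation.ReflTransGen.trans (reach_emb1 g1 g2 (reach_snk g1 a))
        (emb2_src g1 g2 ▸ reach_emb2 g1 g2 (src_reach g2 b))
    rcases u with ⟨⟩ | (nu | nu) <;> rcases v with ⟨⟩ | (nv | nv)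
    · exact Or.inl Relation.ReflTransGen.refl
    · exact Or.inl (src_reach _ _)
    · exact Or.inl (src_reach _ _)
    · exact Or.inr (src_reach _ _)
    · rcases ih1 (Sum.inr nu) (Sum.inr nv) h with h' | h'
      · exact Or.inl (reach_emb1 g1 g2 h')
      · exact Or.inr (reach_emb1 g1 g2 h')
    · exact Or.inl (cross (Sum.inr nu) (Sum.inr nv))
    · exact Or.inr (src_reach _ _)
    · exact Or.inr (cross (Sum.inr nv) (Sum.inr nu))
    · rcases ih2 (Sum.inr nu) (Sum.inr nv) h with h' | h'
      · exact Or.inl (reach_emb2 g1 g2 h')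
      · exact Or.inr (reach_emb2 g1 g2 h')
  | par g1 g2 ih1 ih2 =>
    rcases u with ⟨⟩ | (((a | a) | ⟨⟩)) <;> rcases v with ⟨⟩ | (((b | b) | ⟨⟩)) <;>
      simp [fpath] at h <;>
      try (first
        | exact Or.inl (src_reach _ _)
        | exact Or.inr (src_reach _ _)
        | exact Or.inl (reach_snk _ _)
        | exact Or.inr (reach_snk _ _)
        | exact Or.inl Relation.ReflTransGen.refl)
    · rcases ih1 a b h with h' | h'
      · exact Or.inl (reach_embL g1 g2 h')
      · exact Or.inr (reach_embL g1 g2 h')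
    · rcases ih2 a b h with h' | h'
      · exact Or.inl (reach_embR g1 g2 h')
      · exact Or.inr (reach_embR g1 g2 h')
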